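/- For every n ≥ 0, the n-th Bernoulli polynomial satisfies Bₙ(x) = ∑_{j=0}^{n} ((−1)^j/(j+1)) Δ^j(xⁿ), where Δ is the forward difference operator Δ(p)(x) = p(x+1) − p(x). -/

import Mathlib

open Polynomial Finset

/-- The forward difference operator `Δ(p)(x) = p(x+1) − p(x)` on polynomials. -/
noncomputable def polyFwdDiff (p : Polynomial ℚ) : Polynomial ℚ :=
  p.comp (X + 1) - p

namespace BernoulliFwdDiffAux

/-- Truncated exponential `∑_{k=0}^{N} X^k/k!`. -/
noncomputable def Ee (N : ℕ) : Polynomial ℚ :=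
  ∑ k ∈ range (N + 1), ((k.factorial : ℚ))⁻¹ • X ^ k

/-- Truncated `exp − 1`. -/
noncomputable def ee (N : ℕ) : Polynomial ℚ := Ee N - 1

lemma coeff_Ee (N l : ℕ) :
    (Ee N).coeff l = if l ≤ N then ((l.factorial : ℚ))⁻¹ else 0 := by
  rw [Ee, finset_sum_coeff]
  simp only [coeff_smul, coeff_X_pow, smul_eq_mul, mul_ite, mul_one, mul_zero]
  rw [Finset.sum_ite_eq (range (N + 1)) l]
  simp [Nat.lt_succ_iff]

lemma coeff_ee (N l : ℕ) :
    (ee N).coeff l = if l = 0 then 0 else if l ≤ N then ((l.factorial : ℚ))⁻¹ else 0 := by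
  rw [ee, coeff_sub, coeff_Ee]
  rcases eq_or_ne l 0 with rfl | hl
  · simp
  · simp [hl, coeff_one]

lemma X_dvd_ee (N : ℕ) : X ∣ ee N := by
  rw [X_dvd_iff, coeff_ee]; simp

lemma coeff_ee_pow_eq_zero {N j l : ℕ} (h : l < j) : ((ee N) ^ j).coeff l = 0 := by
  have : X ^ j ∣ (ee N) ^ j := pow_dvd_pow_of_dvd (X_dvd_ee N) j
  exact X_pow_dvd_iff.1 this l h

lemma derivative_Ee (N : ℕ) :
    derivative (Ee N) = Ee N - ((N.factorial : ℚ))⁻¹ • X ^ N := by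
  have h1 : derivative (Ee N) = ∑ k ∈ range N, ((k.factorial : ℚ))⁻¹ • X ^ k := by
    rw [Ee, map_sum, Finset.sum_range_succ']
    have h0 : derivative (((Nat.factorial 0 : ℚ))⁻¹ • (X : Polynomial ℚ) ^ 0) = 0 := by
      simp
    rw [h0, add_zero]
    refine Finset.sum_congr rfl fun k _ => ?_
    rw [derivative_smul, derivative_X_pow, Nat.add_sub_cancel, ← smul_eq_C_mul, smul_smul]
    congr 1
    push_cast [Nat.factorial_succ]
    field_simp
  rw [h1, Ee, Finset.sum_range_succ]
  ring

lemma derivative_ee (N : ℕ) :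
    derivative (ee N) = 1 + ee N - ((N.factorial : ℚ))⁻¹ • X ^ N := by
  rw [ee, map_sub, derivative_one, sub_zero, derivative_Ee]; ring

/-- The derivative as a `ℚ`-linear endomorphism. -/
noncomputable def DD : Module.End ℚ (Polynomial ℚ) := Polynomial.derivative

lemma DD_pow_apply (k : ℕ) (p : Polynomial ℚ) : (DD ^ k) p = derivative^[k] p := by
  induction k with
  | zero => simp
  | succ k ih => rw [pow_succ', Module.End.mul_apply, ih, Function.iterate_succ_apply']; rfl

lemma polyFwdDiff_smul (a : ℚ) (p : Polynomial ℚ) :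
    polyFwdDiff (a • p) = a • polyFwdDiff p := by
  simp [polyFwdDiff, smul_sub, smul_comp]

lemma polyFwdDiff_sum {ι : Type*} (s : Finset ι) (f : ι → Polynomial ℚ) :
    polyFwdDiff (∑ i ∈ s, f i) = ∑ i ∈ s, polyFwdDiff (f i) := by
  classical
  induction s using Finset.induction_on with
  | empty => simp [polyFwdDiff]
  | insert _ _ h ih =>
      rw [Finset.sum_insert h, Finset.sum_insert h, ← ih]
      simp [polyFwdDiff, add_comp]
      ring

lemma aeval_ee_X_pow {N m : ℕ} (hm : m ≤ N) :
    aeval DD (ee N) (X ^ m) = polyFwdDiff (X ^ m) := by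
  have key : aeval DD (Ee N) (X ^ m) = (X + 1 : Polynomial ℚ) ^ m := by
    rw [Ee, map_sum]
    rw [LinearMap.sum_apply]
    have h1 : ∀ k, (aeval (R := ℚ) DD (((k.factorial : ℚ))⁻¹ • X ^ k)) ((X : Polynomial ℚ) ^ m)
        = (m.choose k : ℚ) • X ^ (m - k) := by
      intro k
      rw [map_smul, aeval_X_pow, LinearMap.smul_apply, DD_pow_apply,
        iterate_derivative_X_pow_eq_smul, smul_smul]
      congr 1
      rw [Nat.descFactorial_eq_factorial_mul_choose]
      push_cast
      rw [inv_mul_cancel_left₀]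
      exact Nat.cast_ne_zero.2 k.factorial_pos.ne'
    simp only [h1]
    have h2 : ∑ k ∈ range (N + 1), (m.choose k : ℚ) • (X : Polynomial ℚ) ^ (m - k)
        = ∑ k ∈ range (m + 1), (m.choose k : ℚ) • X ^ (m - k) := by
      refine (Finset.sum_subset (by intro x hx; simp only [mem_range] at *; omega) ?_).symm
      intro k _ hk
      simp only [mem_range, Nat.lt_succ_iff, not_le] at hk
      simp [Nat.choose_eq_zero_of_lt hk]
    rw [h2, ← Finset.sum_range_reflect, add_pow]
    refine Finset.sum_congr rfl fun k hk => ?_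
    simp only [mem_range, Nat.lt_succ_iff] at hk
    rw [Nat.add_sub_cancel, Nat.choose_symm hk, Nat.sub_sub_self hk, one_pow, smul_eq_C_mul,
      C_eq_natCast]
    ring
  rw [ee, map_sub, map_one, LinearMap.sub_apply, key, Module.End.one_apply, polyFwdDiff,
    X_pow_comp]

lemma aeval_ee {N : ℕ} {p : Polynomial ℚ} (hp : p.natDegree ≤ N) :
    aeval DD (ee N) p = polyFwdDiff p := by
  conv_lhs => rw [p.as_sum_range' (N + 1) (Nat.lt_succ_of_le hp)]
  conv_rhs => rw [p.as_sum_range' (N + 1) (Nat.lt_succ_of_le hp)]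
  rw [map_sum, polyFwdDiff_sum]
  refine Finset.sum_congr rfl fun k hk => ?_
  simp only [mem_range, Nat.lt_succ_iff] at hk
  rw [← smul_X_eq_monomial, map_smul, polyFwdDiff_smul, aeval_ee_X_pow hk]

lemma natDegree_aeval_le (n : ℕ) (q : Polynomial ℚ) :
    (aeval DD q ((X : Polynomial ℚ) ^ n)).natDegree ≤ n := by
  rw [aeval_eq_sum_range (R := ℚ) (p := q) DD, LinearMap.sum_apply]
  refine natDegree_sum_le_of_forall_le _ _ fun k _ => ?_
  rw [LinearMap.smul_apply, DD_pow_apply, iterate_derivative_X_pow_eq_smul]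
  refine (natDegree_smul_le _ _).trans ((natDegree_smul_le _ _).trans ?_)
  simp only [natDegree_X_pow]
  exact Nat.sub_le n k

lemma iter_fwdDiff (n j : ℕ) :
    polyFwdDiff^[j] ((X : Polynomial ℚ) ^ n) = aeval DD (ee (n + 1) ^ j) (X ^ n) := by
  induction j with
  | zero => simp
  | succ j ih =>
      rw [Function.iterate_succ_apply', ih, pow_succ', map_mul, Module.End.mul_apply]
      exact (aeval_ee ((natDegree_aeval_le n _).trans n.le_succ)).symm

lemma aeval_apply_eq_sum (n : ℕ) (q : Polynomial ℚ) :
    aeval DD q ((X : Polynomial ℚ) ^ n)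
      = ∑ k ∈ range (n + 1), q.coeff k • derivative^[k] ((X : Polynomial ℚ) ^ n) := by
  have hq : q.natDegree < max (q.natDegree + 1) (n + 1) := lt_of_lt_of_le (Nat.lt_succ_self _) (le_max_left _ _)
  rw [aeval_eq_sum_range' (R := ℚ) hq DD, LinearMap.sum_apply]
  simp only [LinearMap.smul_apply, DD_pow_apply]
  refine (Finset.sum_subset (by intro x hx; simp only [mem_range] at *; omega) ?_).symm
  intro k _ hk
  simp only [mem_range, Nat.lt_succ_iff, not_le] at hk
  rw [iterate_derivative_X_pow_eq_smul, Nat.descFactorial_eq_zero_iff_lt.2 hk]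
  simp

/-- Truncation of `(1/(j+1)) (-1)^j (e^x-1)^{j+1}` summed: a truncated `log(1+(e^x-1))`. -/
noncomputable def SS (N : ℕ) : Polynomial ℚ :=
  ∑ j ∈ range (N + 1), ((-1 : ℚ) ^ j / (j + 1)) • (ee N) ^ (j + 1)

/-- Truncated `log(1+u)/u` at `u = e^x - 1`. -/
noncomputable def GG (N : ℕ) : Polynomial ℚ :=
  ∑ j ∈ range (N + 1), ((-1 : ℚ) ^ j / (j + 1)) • (ee N) ^ j

lemma SS_eq_GG_mul : SS N = GG N * ee N := by
  rw [SS, GG, Finset.sum_mul]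
  exact Finset.sum_congr rfl fun j _ => by rw [smul_mul_assoc, pow_succ]

lemma derivative_SS (N : ℕ) :
    derivative (SS N) = 1 - (-(ee N)) ^ (N + 1)
      - (∑ j ∈ range (N + 1), (-(ee N)) ^ j) * (((N.factorial : ℚ))⁻¹ • X ^ N) := by
  have h1 : derivative (SS N)
      = (∑ j ∈ range (N + 1), (-(ee N)) ^ j) * derivative (ee N) := by
    rw [SS, map_sum, Finset.sum_mul]
    refine Finset.sum_congr rfl fun j _ => ?_
    rw [derivative_smul, derivative_pow, Nat.add_sub_cancel]
    have hrw : (-(ee N)) ^ j = C ((-1 : ℚ) ^ j) * ee N ^ j := by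
      rw [neg_pow, map_pow, map_neg, map_one]
    have hs : ((-1 : ℚ) ^ j / ((j : ℚ) + 1)) * ((j : ℚ) + 1) = (-1 : ℚ) ^ j :=
      div_mul_cancel₀ _ (by positivity)
    rw [hrw, smul_eq_C_mul, ← mul_assoc, ← mul_assoc, ← C_mul]
    push_cast
    rw [hs]
  rw [h1, derivative_ee]
  have h2 : (∑ j ∈ range (N + 1), (-(ee N)) ^ j) * (1 + ee N)
      = 1 - (-(ee N)) ^ (N + 1) := by
    have h := geom_sum_mul (-(ee N)) (N + 1)
    linear_combination -h
  have expand : (∑ j ∈ range (N + 1), (-(ee N)) ^ j)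
        * (1 + ee N - ((N.factorial : ℚ))⁻¹ • X ^ N)
      = (∑ j ∈ range (N + 1), (-(ee N)) ^ j) * (1 + ee N)
        - (∑ j ∈ range (N + 1), (-(ee N)) ^ j) * (((N.factorial : ℚ))⁻¹ • X ^ N) := by
    ring
  rw [expand, h2]

lemma coeff_SS {N m : ℕ} (hm : m ≤ N) :
    (SS N).coeff m = if m = 1 then 1 else 0 := by
  cases m with
  | zero =>
      rw [SS, finset_sum_coeff]
      simp only [coeff_smul]
      rw [Finset.sum_eq_zero]
      · simp
      intro j _
      rw [coeff_ee_pow_eq_zero (Nat.succ_pos j), smul_zero]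
  | succ m =>
      have hd : (derivative (SS N)).coeff m = if m = 0 then 1 else 0 := by
        rw [derivative_SS, coeff_sub, coeff_sub]
        have c1 : ((-(ee N)) ^ (N + 1)).coeff m = 0 := by
          have : X ^ (N + 1) ∣ (-(ee N)) ^ (N + 1) :=
            pow_dvd_pow_of_dvd ((X_dvd_ee N).neg_right) (N + 1)
          exact X_pow_dvd_iff.1 this m (by omega)
        have c2 : ((∑ j ∈ range (N + 1), (-(ee N)) ^ j)
            * (((N.factorial : ℚ))⁻¹ • X ^ N)).coeff m = 0 := by
          have hdvd : (X : Polynomial ℚ) ^ N ∣ ((N.factorial : ℚ))⁻¹ • X ^ N := by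
            rw [smul_eq_C_mul]; exact Dvd.dvd.mul_left dvd_rfl _
          exact X_pow_dvd_iff.1 (hdvd.mul_left _) m (by omega)
        rw [c1, c2, coeff_one]
        simp
      have := coeff_derivative (SS N) m
      rw [hd] at this
      have hm1 : ((m : ℚ) + 1) ≠ 0 := by positivity
      rcases Nat.eq_zero_or_pos m with rfl | hm0
      · simp only [if_pos rfl] at this
        field_simp at this
        simpa using this.symm
      · have hne : m ≠ 0 := hm0.ne'
        simp only [if_neg hne] at this
        have : (SS N).coeff (m + 1) = 0 := by
          field_simp at this
          exact (mul_eq_zero.1 this.symm).resolve_right hm1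
        rw [this, if_neg (by omega)]

lemma coeff_GG_zero (N : ℕ) : (GG N).coeff 0 = 1 := by
  rw [GG, finset_sum_coeff, Finset.sum_range_succ']
  simp only [coeff_smul]
  rw [Finset.sum_eq_zero]
  · simp
  intro j _
  rw [coeff_ee_pow_eq_zero (Nat.succ_pos j), smul_zero]

lemma bernoulli_rec (k : ℕ) (hk : 1 ≤ k) :
    ∑ i ∈ range (k + 1),
      (_root_.bernoulli i / (i.factorial : ℚ)) * (((k + 1 - i).factorial : ℚ))⁻¹ = 0 := by
  have h := _root_.sum_bernoulli (k + 1)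
  rw [if_neg (by omega)] at h
  calc ∑ i ∈ range (k + 1),
        (_root_.bernoulli i / (i.factorial : ℚ)) * (((k + 1 - i).factorial : ℚ))⁻¹
      = ∑ i ∈ range (k + 1),
        (((k + 1).choose i : ℚ) * _root_.bernoulli i) / (((k + 1).factorial : ℚ)) := by
        refine Finset.sum_congr rfl fun i hi => ?_
        simp only [mem_range, Nat.lt_succ_iff] at hi
        rw [Nat.cast_choose ℚ (hi.trans (Nat.le_succ k))]
        have h1 : (i.factorial : ℚ) ≠ 0 := Nat.cast_ne_zero.2 i.factorial_pos.ne'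
        have h2 : (((k + 1 - i).factorial : ℚ)) ≠ 0 :=
          Nat.cast_ne_zero.2 (k + 1 - i).factorial_pos.ne'
        have h3 : (((k + 1).factorial : ℚ)) ≠ 0 := Nat.cast_ne_zero.2 (k + 1).factorial_pos.ne'
        field_simp
    _ = 0 := by rw [← Finset.sum_div, h, zero_div]

lemma coeff_GG {N k : ℕ} (hk : k < N) :
    (GG N).coeff k = _root_.bernoulli k / (k.factorial : ℚ) := by
  induction k using Nat.strong_induction_on with
  | _ k IH =>
    rcases Nat.eq_zero_or_pos k with rfl | hk0
    · simp [coeff_GG_zero]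
    -- use the coefficient of `SS` at `k+1`
    have hSS : (SS N).coeff (k + 1) = 0 := by
      rw [coeff_SS (by omega), if_neg (by omega)]
    rw [SS_eq_GG_mul, coeff_mul, Finset.Nat.sum_antidiagonal_eq_sum_range_succ_mk] at hSS
    rw [Finset.sum_range_succ] at hSS
    have hlast : (GG N).coeff (k + 1) * (ee N).coeff (k + 1 - (k + 1)) = 0 := by
      simp [coeff_ee]
    rw [hlast, add_zero, Finset.sum_range_succ] at hSS
    -- rewrite the earlier coefficients using the inductive hypothesis
    have hmain : ∀ i ∈ range k, (GG N).coeff i * (ee N).coeff (k + 1 - i)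
        = (_root_.bernoulli i / (i.factorial : ℚ)) * (((k + 1 - i).factorial : ℚ))⁻¹ := by
      intro i hi
      simp only [mem_range] at hi
      rw [IH i hi (by omega), coeff_ee, if_neg (by omega), if_pos (by omega)]
    rw [Finset.sum_congr rfl hmain] at hSS
    have hk1 : k + 1 - k = 1 := by omega
    have hself : (ee N).coeff (k + 1 - k) = 1 := by
      rw [hk1, coeff_ee, if_neg one_ne_zero, if_pos (by omega)]
      norm_num
    rw [hself, mul_one] at hSS
    have hber := bernoulli_rec k hk0
    rw [Finset.sum_range_succ] at hber
    have hselfb : (((k + 1 - k).factorial : ℚ))⁻¹ = 1 := by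
      rw [hk1]; norm_num
    rw [hselfb, mul_one] at hber
    linarith [hSS, hber]

end BernoulliFwdDiffAux

open BernoulliFwdDiffAux in
/-- `Bₙ = ∑_{j=0}^n ((−1)^j/(j+1)) Δ^j(Xⁿ)`. -/
theorem bernoulli_eq_sum_polyFwdDiff (n : ℕ) :
    Polynomial.bernoulli n =
      ∑ j ∈ range (n + 1), ((-1 : ℚ) ^ j / (j + 1)) • polyFwdDiff^[j] (X ^ n) := by
  set q : Polynomial ℚ :=
    ∑ j ∈ range (n + 1), ((-1 : ℚ) ^ j / (j + 1)) • (ee (n + 1)) ^ j with hq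
  have h1 : ∑ j ∈ range (n + 1), ((-1 : ℚ) ^ j / (j + 1)) • polyFwdDiff^[j] ((X : Polynomial ℚ) ^ n)
      = aeval DD q ((X : Polynomial ℚ) ^ n) := by
    rw [hq, map_sum, LinearMap.sum_apply]
    refine Finset.sum_congr rfl fun j _ => ?_
    rw [iter_fwdDiff, map_smul, LinearMap.smul_apply]
  have hcoeff : ∀ k ≤ n, q.coeff k = _root_.bernoulli k / (k.factorial : ℚ) := by
    intro k hk
    have hGG : GG (n + 1) = q + ((-1 : ℚ) ^ (n + 1) / ((n + 1 : ℕ) + 1)) • (ee (n + 1)) ^ (n + 1) := by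
      rw [GG, Finset.sum_range_succ, hq]
    have := congrArg (fun p => Polynomial.coeff p k) hGG
    simp only [coeff_add, coeff_smul] at this
    rw [coeff_ee_pow_eq_zero (by omega), smul_zero, add_zero] at this
    rw [← this, coeff_GG (by omega)]
  rw [h1, aeval_apply_eq_sum]
  rw [Polynomial.bernoulli]
  refine Finset.sum_congr rfl fun k hk => ?_
  simp only [mem_range, Nat.lt_succ_iff] at hk
  rw [hcoeff k hk, iterate_derivative_X_pow_eq_smul, smul_smul, ← smul_X_eq_monomial]
  congr 1
  rw [Nat.descFactorial_eq_factorial_mul_choose]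
  have h1 : (k.factorial : ℚ) ≠ 0 := Nat.cast_ne_zero.2 k.factorial_pos.ne'
  push_cast
  field_simp
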